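/- Let (Ω, F, μ) be a probability space, let d ∈ ℕ, let X_i : Ω → ℝ (i ∈ Fin d) be measurable features, let Y : Ω → ℝ be square-integrable, and for each i let g_i : ℝ ≃ᵐ ℝ be a measurable equivalence (a measurable bijection with measurable inverse). For S : Finset (Fin d), let m_S denote the σ-algebra generated jointly by (X_i)_{i ∈ S} and m'_S the σ-algebra generated jointly by (g_i ∘ X_i)_{i ∈ S}, and define ν(S) = E[(Y − E[Y])²] − E[(Y − E[Y | m_S])²] and ν'(S) analogously with m'_S. Then ν = ν', and consequently φ_j(ν) = φ_j(ν') for every j ∈ Fin d: the SAGE values of the MSE-optimal predictor are invariant under invertible measurable transformations of the inputs. -/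

import Mathlib

open MeasureTheory Finset

noncomputable def shapley (d : ℕ) (ν : Finset (Fin d) → ℝ) (j : Fin d) : ℝ :=
  (1 / (Nat.factorial d : ℝ)) * ∑ π : Equiv.Perm (Fin d),
    (ν (Finset.univ.filter fun i => π i ≤ π j) - ν (Finset.univ.filter fun i => π i < π j))

/-- The σ-algebra generated jointly by the features `X i` for `i ∈ S`. -/
def coalitionSigma {Ω : Type*} {d : ℕ} (X : Fin d → Ω → ℝ) (S : Finset (Fin d)) :
    MeasurableSpace Ω :=
  ⨆ i ∈ S, MeasurableSpace.comap (X i) inferInstance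

theorem sage_invariant_under_measurableEquiv
    {Ω : Type*} [mΩ : MeasurableSpace Ω]
    (μ : Measure Ω) [IsProbabilityMeasure μ]
    (d : ℕ) (X : Fin d → Ω → ℝ) (hX : ∀ i, Measurable (X i))
    (Y : Ω → ℝ) (hYmeas : Measurable Y) (hYL2 : MemLp Y 2 μ)
    (g : Fin d → (ℝ ≃ᵐ ℝ))
    (ν ν' : Finset (Fin d) → ℝ)
    (hν : ∀ S : Finset (Fin d),
      ν S = ∫ ω, (Y ω - ∫ ω', Y ω' ∂μ) ^ 2 ∂μ
        - ∫ ω, (Y ω - (μ[Y | coalitionSigma X S]) ω) ^ 2 ∂μ)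
    (hν' : ∀ S : Finset (Fin d),
      ν' S = ∫ ω, (Y ω - ∫ ω', Y ω' ∂μ) ^ 2 ∂μ
        - ∫ ω, (Y ω - (μ[Y | coalitionSigma (fun i => (g i) ∘ (X i)) S]) ω) ^ 2 ∂μ) :
    ν = ν' ∧ ∀ j : Fin d, shapley d ν j = shapley d ν' j := by
  have hsigma : ∀ S, coalitionSigma X S = coalitionSigma (fun i => (g i) ∘ (X i)) S := by
    intro S
    unfold coalitionSigma
    refine iSup_congr fun i => iSup_congr fun _ => ?_
    rw [← MeasurableSpace.comap_comp, (g i).measurableEmbedding.comap_eq]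
  have hνν' : ν = ν' := by
    funext S
    rw [hν, hν', hsigma]
  exact ⟨hνν', fun j => by rw [hνν']⟩
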